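/- arXiv:1509.08124 — 2 statements merged into one kernel-verified Lean document; each statement's English description precedes it below -/
import Mathlib

section
/- The following algebraic identity holds: (1/|A|²) Σ_{j∈A} Σ_{k∈A} [ r_{iijk} + (1/4)·r_{ij}·r_{ik}·(r_{iiii} + r_{iijj} + r_{iikk} + r_{jjkk}) − (1/2)·r_{ij}·(r_{iiik} + r_{ijjk}) − (1/2)·r_{ik}·(r_{iiij} + r_{ijkk}) ] = (1/n) Σ_{ℓ=1}^n { (r_A²/4)·u_{iℓ}⁴ − r_A·W_ℓ·u_{iℓ}³ + ((r_A·Y_ℓ)/2 + W_ℓ²)·u_{iℓ}² − W_ℓ·Y_ℓ·u_{iℓ} + Y_ℓ²/4 }. -/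
/-- `r_{jk} = Σ_ℓ u_{jℓ}·u_{kℓ}`. -/
noncomputable def rr {n p : ℕ} (u : Fin p → Fin n → ℝ) (j k : Fin p) : ℝ :=
  ∑ ℓ, u j ℓ * u k ℓ

/-- `r_{jkhm} = (1/n) Σ_ℓ u_{jℓ}·u_{kℓ}·u_{hℓ}·u_{mℓ}`. -/
noncomputable def r4 {n p : ℕ} (u : Fin p → Fin n → ℝ) (j k h m : Fin p) : ℝ :=
  (n : ℝ)⁻¹ * ∑ ℓ, u j ℓ * u k ℓ * u h ℓ * u m ℓ

/-- `W_ℓ = (1/|A|) Σ_{j∈A} u_{jℓ}`. -/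
noncomputable def Wvec {n p : ℕ} (u : Fin p → Fin n → ℝ) (A : Finset (Fin p)) (ℓ : Fin n) : ℝ :=
  (A.card : ℝ)⁻¹ * ∑ j ∈ A, u j ℓ

/-- `Y_ℓ = (1/|A|) Σ_{j∈A} r_{ij}·u_{jℓ}²`. -/
noncomputable def Yvec {n p : ℕ} (u : Fin p → Fin n → ℝ) (i : Fin p) (A : Finset (Fin p)) (ℓ : Fin n) : ℝ :=
  (A.card : ℝ)⁻¹ * ∑ j ∈ A, rr u i j * (u j ℓ) ^ 2

/-- `r_A = (1/|A|) Σ_{j∈A} r_{ij}`. -/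
noncomputable def rAvg {n p : ℕ} (u : Fin p → Fin n → ℝ) (i : Fin p) (A : Finset (Fin p)) : ℝ :=
  (A.card : ℝ)⁻¹ * ∑ j ∈ A, rr u i j

/-- The algebraic identity expressing the variance estimator `τ̂` in terms of the vectors
`W`, `Y` and `u_i`. -/
theorem stmt5 {n p : ℕ} (hn : 1 ≤ n) (hp : 1 ≤ p)
    (u : Fin p → Fin n → ℝ) (i : Fin p) (A : Finset (Fin p)) (hA : A.Nonempty) :
    ((A.card : ℝ)⁻¹) ^ 2 * ∑ j ∈ A, ∑ k ∈ A,
      (r4 u i i j k +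
        (1 / 4) * rr u i j * rr u i k *
          (r4 u i i i i + r4 u i i j j + r4 u i i k k + r4 u j j k k) -
        (1 / 2) * rr u i j * (r4 u i i i k + r4 u i j j k) -
        (1 / 2) * rr u i k * (r4 u i i i j + r4 u i j k k)) =
    (n : ℝ)⁻¹ * ∑ ℓ : Fin n,
      ((rAvg u i A) ^ 2 / 4 * (u i ℓ) ^ 4 -
        rAvg u i A * Wvec u A ℓ * (u i ℓ) ^ 3 +
        (rAvg u i A * Yvec u i A ℓ / 2 + (Wvec u A ℓ) ^ 2) * (u i ℓ) ^ 2 -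
        Wvec u A ℓ * Yvec u i A ℓ * u i ℓ + (Yvec u i A ℓ) ^ 2 / 4) := by
  set a : Fin p → Fin n → ℝ :=
    fun j ℓ => u i ℓ * u j ℓ - rr u i j / 2 * ((u i ℓ) ^ 2 + (u j ℓ) ^ 2) with ha
  have h1 : ∀ j k : Fin p,
      (r4 u i i j k +
        (1 / 4) * rr u i j * rr u i k *
          (r4 u i i i i + r4 u i i j j + r4 u i i k k + r4 u j j k k) -
        (1 / 2) * rr u i j * (r4 u i i i k + r4 u i j j k) -
        (1 / 2) * rr u i k * (r4 u i i i j + r4 u i j k k)) =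
      (n : ℝ)⁻¹ * ∑ ℓ, a j ℓ * a k ℓ := by
    intro j k
    have hs : ∑ ℓ, a j ℓ * a k ℓ =
        ∑ ℓ, (u i ℓ * u i ℓ * u j ℓ * u k ℓ +
          (1 / 4) * rr u i j * rr u i k *
            (u i ℓ * u i ℓ * u i ℓ * u i ℓ + u i ℓ * u i ℓ * u j ℓ * u j ℓ +
              u i ℓ * u i ℓ * u k ℓ * u k ℓ + u j ℓ * u j ℓ * u k ℓ * u k ℓ) -
          (1 / 2) * rr u i j * (u i ℓ * u i ℓ * u i ℓ * u k ℓ + u i ℓ * u j ℓ * u j ℓ * u k ℓ) -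
          (1 / 2) * rr u i k * (u i ℓ * u i ℓ * u i ℓ * u j ℓ + u i ℓ * u j ℓ * u k ℓ * u k ℓ)) := by
      refine Finset.sum_congr rfl fun ℓ _ => ?_
      simp only [ha]
      ring
    simp only [r4]
    rw [hs]
    simp only [Finset.sum_add_distrib, Finset.sum_sub_distrib, ← Finset.mul_sum]
    ring
  have h2 : ∀ ℓ : Fin n, (A.card : ℝ)⁻¹ * ∑ j ∈ A, a j ℓ =
      u i ℓ * Wvec u A ℓ - rAvg u i A / 2 * (u i ℓ) ^ 2 - Yvec u i A ℓ / 2 := by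
    intro ℓ
    have e1 : ∑ x ∈ A, rr u i x / 2 * ((u i ℓ) ^ 2 + (u x ℓ) ^ 2) =
        (u i ℓ) ^ 2 / 2 * ∑ x ∈ A, rr u i x + (1 / 2) * ∑ x ∈ A, rr u i x * (u x ℓ) ^ 2 := by
      rw [Finset.mul_sum, Finset.mul_sum, ← Finset.sum_add_distrib]
      exact Finset.sum_congr rfl fun x _ => by ring
    have e2 : ∑ x ∈ A, u i ℓ * u x ℓ = u i ℓ * ∑ x ∈ A, u x ℓ := (Finset.mul_sum _ _ _).symm
    simp only [ha, Wvec, rAvg, Yvec, Finset.sum_sub_distrib, e1, e2]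
    ring
  have hswap : ∑ j ∈ A, ∑ k ∈ A, (n : ℝ)⁻¹ * ∑ ℓ, a j ℓ * a k ℓ =
      (n : ℝ)⁻¹ * ∑ ℓ, (∑ j ∈ A, a j ℓ) * (∑ k ∈ A, a k ℓ) := by
    simp only [← Finset.mul_sum]
    congr 1
    have e3 : ∀ j : Fin p, ∑ k ∈ A, ∑ ℓ : Fin n, a j ℓ * a k ℓ =
        ∑ ℓ : Fin n, ∑ k ∈ A, a j ℓ * a k ℓ := fun j => Finset.sum_comm
    simp only [e3]
    rw [Finset.sum_comm]
    exact Finset.sum_congr rfl fun ℓ _ => by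
      rw [Finset.sum_mul]
      exact Finset.sum_congr rfl fun j _ => (Finset.mul_sum _ _ _).symm
  calc ((A.card : ℝ)⁻¹) ^ 2 * ∑ j ∈ A, ∑ k ∈ A,
      (r4 u i i j k +
        (1 / 4) * rr u i j * rr u i k *
          (r4 u i i i i + r4 u i i j j + r4 u i i k k + r4 u j j k k) -
        (1 / 2) * rr u i j * (r4 u i i i k + r4 u i j j k) -
        (1 / 2) * rr u i k * (r4 u i i i j + r4 u i j k k))
      = ((A.card : ℝ)⁻¹) ^ 2 * ∑ j ∈ A, ∑ k ∈ A, (n : ℝ)⁻¹ * ∑ ℓ, a j ℓ * a k ℓ := by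
        simp_rw [h1]
    _ = (n : ℝ)⁻¹ * ∑ ℓ, ((A.card : ℝ)⁻¹ * ∑ j ∈ A, a j ℓ) ^ 2 := by
        rw [hswap, mul_left_comm]
        congr 1
        rw [Finset.mul_sum]
        exact Finset.sum_congr rfl fun ℓ _ => by ring
    _ = _ := by
        refine congrArg _ (Finset.sum_congr rfl fun ℓ _ => ?_)
        rw [h2]
        ring
end

section
/- Let u_i and u_j (j ∈ A) be standardized vectors in ℝ^(n₁), and let v_i and v_j (j ∈ A) be standardized vectors in ℝ^(n₂). Let W₁ = (1/|A|) Σ_{j∈A} u_j and W₂ = (1/|A|) Σ_{j∈A} v_j, and assume W₁ ≠ 0 and W₂ ≠ 0. Define Δ̂(i,A) = (1/|A|) Σ_{j∈A} ( r̂(u_i, u_j) − r̂(v_i, v_j) ). Then Δ̂(i,A) = ‖W₁‖ · r̂(W₁, u_i) − ‖W₂‖ · r̂(W₂, v_i), where ‖·‖ denotes the Euclidean norm. -/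
/-- A vector `u ∈ ℝⁿ` is standardized if it has zero coordinate sum and unit sum of squares. -/
def IsStandardized {n : ℕ} (u : Fin n → ℝ) : Prop :=
  (∑ ℓ, u ℓ = 0) ∧ (∑ ℓ, (u ℓ) ^ 2 = 1)

/-- The sample correlation of two vectors in `ℝⁿ`. -/
noncomputable def sampleCorr {n : ℕ} (x y : Fin n → ℝ) : ℝ :=
  (∑ ℓ, (x ℓ - (∑ m, x m) / n) * (y ℓ - (∑ m, y m) / n)) /
    Real.sqrt ((∑ ℓ, (x ℓ - (∑ m, x m) / n) ^ 2) * (∑ ℓ, (y ℓ - (∑ m, y m) / n) ^ 2))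

/-- The Euclidean norm on `ℝⁿ`. -/
noncomputable def euclNorm {n : ℕ} (x : Fin n → ℝ) : ℝ :=
  Real.sqrt (∑ ℓ, (x ℓ) ^ 2)

lemma corr_std {n : ℕ} {x y : Fin n → ℝ} (hx : IsStandardized x) (hy : IsStandardized y) :
    sampleCorr x y = ∑ ℓ, x ℓ * y ℓ := by
  unfold sampleCorr
  rw [hx.1, hy.1]
  simp [hx.2, hy.2]

lemma corr_left {n : ℕ} {W y : Fin n → ℝ} (hW0 : ∑ ℓ, W ℓ = 0) (hW : W ≠ 0)
    (hy : IsStandardized y) :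
    euclNorm W * sampleCorr W y = ∑ ℓ, W ℓ * y ℓ := by
  have hS : 0 < ∑ ℓ, (W ℓ) ^ 2 := by
    rcases Function.ne_iff.1 hW with ⟨ℓ, hℓ⟩
    exact Finset.sum_pos' (fun i _ => sq_nonneg _)
      ⟨ℓ, Finset.mem_univ _, pow_pos (abs_pos.2 hℓ) 2 |>.trans_eq (sq_abs _)⟩
  have hs : Real.sqrt (∑ ℓ, (W ℓ) ^ 2) ≠ 0 := ne_of_gt (Real.sqrt_pos.2 hS)
  unfold sampleCorr euclNorm
  rw [hW0, hy.1]
  simp only [zero_div, sub_zero, hy.2, mul_one]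
  rw [mul_div_cancel₀ _ hs]

/-- Geometric form of the test statistic: for standardized vectors `u_i, (u_j)_{j∈A}` in
`ℝ^{n₁}` and `v_i, (v_j)_{j∈A}` in `ℝ^{n₂}` with nonzero centroids `W₁, W₂`,
`Δ̂(i,A) = ‖W₁‖·r̂(W₁,u_i) − ‖W₂‖·r̂(W₂,v_i)`. -/
theorem stmt12 {n₁ n₂ : ℕ} (hn₁ : 2 ≤ n₁) (hn₂ : 2 ≤ n₂) {ι : Type*}
    (A : Finset ι) (hA : A.Nonempty)
    (ui : Fin n₁ → ℝ) (u : ι → Fin n₁ → ℝ)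
    (vi : Fin n₂ → ℝ) (v : ι → Fin n₂ → ℝ)
    (hui : IsStandardized ui) (hu : ∀ j ∈ A, IsStandardized (u j))
    (hvi : IsStandardized vi) (hv : ∀ j ∈ A, IsStandardized (v j))
    (W₁ : Fin n₁ → ℝ) (hW₁ : W₁ = fun ℓ => (A.card : ℝ)⁻¹ * ∑ j ∈ A, u j ℓ)
    (W₂ : Fin n₂ → ℝ) (hW₂ : W₂ = fun ℓ => (A.card : ℝ)⁻¹ * ∑ j ∈ A, v j ℓ)
    (hW₁0 : W₁ ≠ 0) (hW₂0 : W₂ ≠ 0) :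
    (A.card : ℝ)⁻¹ * ∑ j ∈ A, (sampleCorr ui (u j) - sampleCorr vi (v j)) =
      euclNorm W₁ * sampleCorr W₁ ui - euclNorm W₂ * sampleCorr W₂ vi := by
  have hsum1 : ∑ ℓ, W₁ ℓ = 0 := by
    rw [hW₁]
    rw [← Finset.mul_sum, Finset.sum_comm]
    simp [fun j hj => (hu j hj).1, Finset.sum_congr rfl (fun j hj => (hu j hj).1)]
  have hsum2 : ∑ ℓ, W₂ ℓ = 0 := by
    rw [hW₂]
    rw [← Finset.mul_sum, Finset.sum_comm]
    simp [Finset.sum_congr rfl (fun j hj => (hv j hj).1)]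
  rw [corr_left hsum1 hW₁0 hui, corr_left hsum2 hW₂0 hvi]
  have h1 : ∑ ℓ, W₁ ℓ * ui ℓ = (A.card : ℝ)⁻¹ * ∑ j ∈ A, ∑ ℓ, ui ℓ * u j ℓ := by
    simp only [hW₁, Finset.sum_mul, Finset.mul_sum]
    rw [Finset.sum_comm]
    exact Finset.sum_congr rfl fun j _ => Finset.sum_congr rfl fun ℓ _ => by ring
  have h2 : ∑ ℓ, W₂ ℓ * vi ℓ = (A.card : ℝ)⁻¹ * ∑ j ∈ A, ∑ ℓ, vi ℓ * v j ℓ := by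
    simp only [hW₂, Finset.sum_mul, Finset.mul_sum]
    rw [Finset.sum_comm]
    exact Finset.sum_congr rfl fun j _ => Finset.sum_congr rfl fun ℓ _ => by ring
  rw [h1, h2, ← mul_sub, ← Finset.sum_sub_distrib]
  congr 1
  exact Finset.sum_congr rfl fun j hj => by
    rw [corr_std hui (hu j hj), corr_std hvi (hv j hj)]
end
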